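/- Let Q : ℝ → ℝ be a continuous T-periodic function. There exists a (positive) T-periodic solution ρ̂ of the logistic ODE dρ̂/dt = ρ̂ (Q(t) − ρ̂) on (0,T) with ρ̂(0) = ρ̂(T) if and only if ∫₀ᵀ Q(t) dt > 0. Moreover in that case the solution is unique and is given explicitly by ρ̂(t) = (1 − exp(−∫₀ᵀ Q(s) ds)) / ( exp(−∫₀ᵀ Q(s) ds) · ∫_t^{t+T} exp(∫_t^s Q(θ) dθ) ds ). -/

import Mathlib

open Real intervalIntegral

section Aux

variable (T : ℝ) (Q : ℝ → ℝ)

/-- Fundamental solution `g t = exp (∫₀ᵗ Q)`. -/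
noncomputable def logisticG : ℝ → ℝ := fun t => Real.exp (∫ θ in (0:ℝ)..t, Q θ)

/-- `G t = ∫ₜ^{t+T} g`. -/
noncomputable def logisticGG : ℝ → ℝ := fun t => ∫ s in t..(t + T), logisticG Q s

variable {T Q}

lemma logisticG_pos (t : ℝ) : 0 < logisticG Q t := Real.exp_pos _

lemma logisticG_hasDerivAt (hQc : Continuous Q) (t : ℝ) :
    HasDerivAt (logisticG Q) (Q t * logisticG Q t) t := by
  have h1 : HasDerivAt (fun x => ∫ θ in (0:ℝ)..x, Q θ) (Q t) t :=
    intervalIntegral.integral_hasDerivAt_right (hQc.intervalIntegrable 0 t)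
      (hQc.stronglyMeasurableAtFilter _ _) hQc.continuousAt
  have h2 := h1.exp
  rw [mul_comm] at h2
  exact h2

lemma logisticG_cont (hQc : Continuous Q) : Continuous (logisticG Q) :=
  continuous_iff_continuousAt.2 fun t => (logisticG_hasDerivAt hQc t).continuousAt

lemma logisticG_shift (hQc : Continuous Q) (hQper : ∀ t, Q (t + T) = Q t) (t : ℝ) :
    logisticG Q (t + T) = Real.exp (∫ s in (0:ℝ)..T, Q s) * logisticG Q t := by
  have hper : Function.Periodic Q T := hQper
  have h1 : (∫ θ in t..(t + T), Q θ) = ∫ s in (0:ℝ)..T, Q s := by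
    simpa using hper.intervalIntegral_add_eq t 0
  have h2 : (∫ θ in (0:ℝ)..t, Q θ) + ∫ θ in t..(t + T), Q θ = ∫ θ in (0:ℝ)..(t + T), Q θ :=
    intervalIntegral.integral_add_adjacent_intervals (hQc.intervalIntegrable 0 t)
      (hQc.intervalIntegrable t (t + T))
  simp only [logisticG]
  rw [← Real.exp_add]
  congr 1
  linarith [h1, h2]

lemma logisticGG_pos (hT : 0 < T) (hQc : Continuous Q) (t : ℝ) : 0 < logisticGG T Q t :=
  intervalIntegral.intervalIntegral_pos_of_pos
    ((logisticG_cont hQc).intervalIntegrable (μ := MeasureTheory.volume) t (t + T))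
    (fun x => logisticG_pos x) (by linarith)

lemma logisticGG_eq (hQc : Continuous Q) (t : ℝ) :
    logisticGG T Q t =
      (∫ s in (0:ℝ)..(t + T), logisticG Q s) - ∫ s in (0:ℝ)..t, logisticG Q s := by
  have := intervalIntegral.integral_add_adjacent_intervals
    ((logisticG_cont hQc).intervalIntegrable (μ := MeasureTheory.volume) 0 t)
    ((logisticG_cont hQc).intervalIntegrable (μ := MeasureTheory.volume) t (t + T))
  simp only [logisticGG]
  linarith

lemma logisticGG_hasDerivAt (hQc : Continuous Q) (t : ℝ) :
    HasDerivAt (logisticGG T Q) (logisticG Q (t + T) - logisticG Q t) t := by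
  have hF : ∀ x : ℝ, HasDerivAt (fun y => ∫ s in (0:ℝ)..y, logisticG Q s) (logisticG Q x) x := by
    intro x
    exact intervalIntegral.integral_hasDerivAt_right
      ((logisticG_cont hQc).intervalIntegrable 0 x)
      ((logisticG_cont hQc).stronglyMeasurableAtFilter _ _)
      (logisticG_cont hQc).continuousAt
  have h1 : HasDerivAt (fun y => ∫ s in (0:ℝ)..(y + T), logisticG Q s)
      (logisticG Q (t + T)) t := by
    have := (hF (t + T)).comp t ((hasDerivAt_id t).add_const T)
    simpa [Function.comp_def] using this
  have := h1.sub (hF t)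
  refine HasDerivAt.congr_of_eventuallyEq this ?_
  filter_upwards with x
  rw [logisticGG_eq hQc]
  rfl

lemma logisticGG_shift (hQc : Continuous Q) (hQper : ∀ t, Q (t + T) = Q t) (t : ℝ) :
    logisticGG T Q (t + T) = Real.exp (∫ s in (0:ℝ)..T, Q s) * logisticGG T Q t := by
  have h1 : logisticGG T Q (t + T) = ∫ s in t..(t + T), logisticG Q (s + T) := by
    rw [intervalIntegral.integral_comp_add_right (fun s => logisticG Q s) T]
    simp [logisticGG]
  rw [h1]
  simp only [logisticG_shift hQc hQper]
  rw [intervalIntegral.integral_const_mul]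
  rfl

lemma logisticJ_eq (hQc : Continuous Q) (t : ℝ) :
    (∫ s in t..(t + T), Real.exp (∫ θ in t..s, Q θ)) =
      logisticGG T Q t / logisticG Q t := by
  have hcongr : ∀ s : ℝ, Real.exp (∫ θ in t..s, Q θ) = logisticG Q s / logisticG Q t := by
    intro s
    have h2 : (∫ θ in (0:ℝ)..t, Q θ) + ∫ θ in t..s, Q θ = ∫ θ in (0:ℝ)..s, Q θ :=
      intervalIntegral.integral_add_adjacent_intervals (hQc.intervalIntegrable 0 t)
        (hQc.intervalIntegrable t s)
    have : (∫ θ in t..s, Q θ) = (∫ θ in (0:ℝ)..s, Q θ) - ∫ θ in (0:ℝ)..t, Q θ := by linarith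
    rw [this, Real.exp_sub]
    rfl
  rw [intervalIntegral.integral_congr (fun s _ => hcongr s)]
  rw [intervalIntegral.integral_div]
  rfl

/-- Key identity for any positive periodic solution. -/
lemma logistic_key (hT : 0 < T) (hQc : Continuous Q) (hQper : ∀ t, Q (t + T) = Q t)
    (ρ : ℝ → ℝ) (hpos : ∀ t, 0 < ρ t) (hperρ : ∀ t, ρ (t + T) = ρ t)
    (hderiv : ∀ t, HasDerivAt ρ (ρ t * (Q t - ρ t)) t) (t : ℝ) :
    logisticGG T Q t =
      (ρ t)⁻¹ * logisticG Q t * (Real.exp (∫ s in (0:ℝ)..T, Q s) - 1) := by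
  set u : ℝ → ℝ := fun s => (ρ s)⁻¹ with hu
  have huderiv : ∀ s, HasDerivAt u (1 - Q s * u s) s := by
    intro s
    have h : HasDerivAt u (-(ρ s * (Q s - ρ s)) / ρ s ^ 2) s := (hderiv s).inv (ne_of_gt (hpos s))
    convert h using 1
    have hρ : ρ s ≠ 0 := ne_of_gt (hpos s)
    show 1 - Q s * (ρ s)⁻¹ = _
    field_simp [hu]
    ring
  have hhd : ∀ s, HasDerivAt (fun s => u s * logisticG Q s) (logisticG Q s) s := by
    intro s
    have h : HasDerivAt (fun s => u s * logisticG Q s)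
        ((1 - Q s * u s) * logisticG Q s + u s * (Q s * logisticG Q s)) s :=
      (huderiv s).mul (logisticG_hasDerivAt hQc s)
    convert h using 1
    ring
  have hint : (∫ s in t..(t + T), logisticG Q s)
      = u (t + T) * logisticG Q (t + T) - u t * logisticG Q t :=
    intervalIntegral.integral_eq_sub_of_hasDerivAt (fun s _ => hhd s)
      ((logisticG_cont hQc).intervalIntegrable t (t + T))
  have huT : u (t + T) = u t := by simp [hu, hperρ t]
  rw [huT, logisticG_shift hQc hQper] at hint
  have hGG : logisticGG T Q t = ∫ s in t..(t + T), logisticG Q s := rfl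
  rw [hGG, hint]
  ring

end Aux

/-- Existence and uniqueness, with explicit formula, of a positive `T`-periodic solution of
the non-autonomous logistic equation `ρ' = ρ(Q(t) − ρ)`. -/
theorem periodic_logistic_existence_uniqueness
    (T : ℝ) (hT : 0 < T) (Q : ℝ → ℝ) (hQc : Continuous Q)
    (hQper : ∀ t, Q (t + T) = Q t) :
    ((∃ ρ : ℝ → ℝ, (∀ t, 0 < ρ t) ∧ ρ 0 = ρ T ∧ (∀ t, ρ (t + T) = ρ t) ∧
        (∀ t, HasDerivAt ρ (ρ t * (Q t - ρ t)) t)) ↔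
      0 < ∫ t in (0:ℝ)..T, Q t) ∧
    (∀ ρ : ℝ → ℝ, (∀ t, 0 < ρ t) → ρ 0 = ρ T → (∀ t, ρ (t + T) = ρ t) →
      (∀ t, HasDerivAt ρ (ρ t * (Q t - ρ t)) t) →
      ∀ t, ρ t =
        (1 - Real.exp (-∫ s in (0:ℝ)..T, Q s)) /
          (Real.exp (-∫ s in (0:ℝ)..T, Q s) *
            ∫ s in t..(t + T), Real.exp (∫ θ in t..s, Q θ))) := by
  constructor
  · constructor
    · rintro ⟨ρ, hpos, _, hperρ, hderiv⟩
      have hkey := logistic_key hT hQc hQper ρ hpos hperρ hderiv 0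
      have hGpos := logisticGG_pos hT hQc (T := T) 0
      have hupos : 0 < (ρ 0)⁻¹ := inv_pos.2 (hpos 0)
      have hgpos := logisticG_pos (Q := Q) 0
      have h1 : 0 < Real.exp (∫ s in (0:ℝ)..T, Q s) - 1 := by
        by_contra h
        push_neg at h
        have h2 := mul_nonpos_of_nonneg_of_nonpos
          (le_of_lt (mul_pos hupos hgpos)) h
        linarith [hkey, hGpos, h2]
      have h2 : (1 : ℝ) < Real.exp (∫ s in (0:ℝ)..T, Q s) := by linarith
      rwa [show (1:ℝ) = Real.exp 0 by simp, Real.exp_lt_exp] at h2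
    · intro hApos
      have hc : 0 < Real.exp (∫ s in (0:ℝ)..T, Q s) - 1 := by
        have : Real.exp 0 < Real.exp (∫ s in (0:ℝ)..T, Q s) := Real.exp_lt_exp.2 hApos
        simpa using this
      set c : ℝ := Real.exp (∫ s in (0:ℝ)..T, Q s) - 1 with hcdef
      have hE : Real.exp (∫ s in (0:ℝ)..T, Q s) ≠ 0 := Real.exp_ne_zero _
      have hperρ : ∀ t, c * logisticG Q (t + T) / logisticGG T Q (t + T) =
          c * logisticG Q t / logisticGG T Q t := by
        intro t
        have hGne : logisticGG T Q t ≠ 0 := ne_of_gt (logisticGG_pos hT hQc t)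
        rw [logisticG_shift hQc hQper t, logisticGG_shift hQc hQper t]
        field_simp
      refine ⟨fun t => c * logisticG Q t / logisticGG T Q t, ?_, ?_, ?_, ?_⟩
      · intro t
        exact div_pos (mul_pos hc (logisticG_pos t)) (logisticGG_pos hT hQc t)
      · have h0 := (hperρ 0).symm
        rw [zero_add] at h0
        exact h0
      · intro t
        exact hperρ t
      · intro t
        have hGne : logisticGG T Q t ≠ 0 := ne_of_gt (logisticGG_pos hT hQc t)
        have hgne : logisticG Q t ≠ 0 := ne_of_gt (logisticG_pos t)
        have hd : HasDerivAt (fun t => c * logisticG Q t / logisticGG T Q t)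
            ((c * (Q t * logisticG Q t) * logisticGG T Q t -
              c * logisticG Q t * (logisticG Q (t + T) - logisticG Q t)) /
              (logisticGG T Q t) ^ 2) t :=
          (((logisticG_hasDerivAt hQc t).const_mul c).div
            (logisticGG_hasDerivAt hQc t) hGne)
        convert hd using 1
        rw [logisticG_shift hQc hQper t]
        field_simp
        ring
  · intro ρ hpos _ hperρ hderiv t
    have hkey := logistic_key hT hQc hQper ρ hpos hperρ hderiv t
    have hGpos := logisticGG_pos hT hQc (T := T) t
    have hgpos := logisticG_pos (Q := Q) t
    have hρpos := hpos t
    have hρne : ρ t ≠ 0 := ne_of_gt hρpos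
    have hgne : logisticG Q t ≠ 0 := ne_of_gt hgpos
    have hGne : logisticGG T Q t ≠ 0 := ne_of_gt hGpos
    have hE : Real.exp (∫ s in (0:ℝ)..T, Q s) ≠ 0 := Real.exp_ne_zero _
    have he1 : Real.exp (∫ s in (0:ℝ)..T, Q s) - 1 ≠ 0 := by
      have : 0 < (ρ t)⁻¹ * logisticG Q t * (Real.exp (∫ s in (0:ℝ)..T, Q s) - 1) :=
        hkey ▸ hGpos
      intro habs
      rw [habs, mul_zero] at this
      exact lt_irrefl 0 this
    rw [logisticJ_eq hQc (T := T) t, Real.exp_neg, hkey]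
    field_simp
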